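/- Let H ∈ ℂ^{Nr×Nt}, G ∈ ℂ^{Ne×Nt}, let Q ∈ ℂ^{Nt×Nt} be Hermitian positive semidefinite and Z ∈ ℂ^{Nt×Nt} Hermitian positive semidefinite. If the stationarity equation with zero multiplier holds, i.e. H†(I + H Q H†)⁻¹H − G†(I + G Q G†)⁻¹G + Z = 0, then H†H − G†G = −(I + H†H Q) Z (I + Q G†G); in particular H†H − G†G is negative semidefinite. -/

import Mathlib

open Matrix
open scoped ComplexOrder

/-- Key spectral lemma: if `E` is Hermitian and `E = Z - Z R E` with `Z, R ⪰ 0`,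
then `E ⪰ 0`. -/
lemma aux_psd {n : ℕ} {Z R E : Matrix (Fin n) (Fin n) ℂ}
    (hZ : Z.PosSemidef) (hR : R.PosSemidef) (hE : E.IsHermitian)
    (heq : E = Z - Z * R * E) : E.PosSemidef := by
  apply hE.posSemidef_iff_eigenvalues_nonneg.mpr
  intro i
  by_contra hlt
  push_neg at hlt
  set l : ℝ := hE.eigenvalues i with hl
  set v : Fin n → ℂ := ⇑(hE.eigenvectorBasis i) with hvdef
  have hvne : v ≠ 0 := fun h => hE.eigenvectorBasis.orthonormal.ne_zero i ((WithLp.ofLp_eq_zero 2).mp h)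
  have hv : E *ᵥ v = (l : ℂ) • v := by
    rw [hE.mulVec_eigenvectorBasis i]
    ext j
    simp only [Pi.smul_apply, Complex.real_smul, smul_eq_mul]
    rfl
  set w : Fin n → ℂ := v - (l : ℂ) • (R *ᵥ v) with hwdef
  have hZw : Z *ᵥ w = (l : ℂ) • v := by
    have h1 : E *ᵥ v = Z *ᵥ v - Z *ᵥ (R *ᵥ (E *ᵥ v)) := by
      conv_lhs => rw [heq]
      rw [sub_mulVec, mulVec_mulVec, mulVec_mulVec, Matrix.mul_assoc]
    rw [hv, mulVec_smul, mulVec_smul] at h1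
    rw [hwdef, mulVec_sub, mulVec_smul, ← h1]
  have h0 : (0:ℂ) ≤ star w ⬝ᵥ (Z *ᵥ w) := hZ.dotProduct_mulVec_nonneg w
  rw [hZw, dotProduct_smul] at h0
  have hr : (0:ℂ) ≤ star v ⬝ᵥ (R *ᵥ v) := hR.dotProduct_mulVec_nonneg v
  have key : star (R *ᵥ v) ⬝ᵥ v = star v ⬝ᵥ (R *ᵥ v) := by
    rw [star_mulVec, ← dotProduct_mulVec, hR.1.eq]
  have hswv : star w ⬝ᵥ v = star v ⬝ᵥ v - (l : ℂ) * (star v ⬝ᵥ (R *ᵥ v)) := by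
    rw [hwdef, star_sub, star_smul, sub_dotProduct, smul_dotProduct, key,
      Complex.star_def, Complex.conj_ofReal, smul_eq_mul]
  have hc1 : (0:ℂ) < star v ⬝ᵥ v := dotProduct_star_self_pos_iff.mpr hvne
  have hlneg : (l : ℂ) < 0 := by exact_mod_cast (hlt : l < 0)
  have hpos : (0:ℂ) < star w ⬝ᵥ v := by
    rw [hswv, sub_eq_add_neg, ← neg_mul]
    exact add_pos_of_pos_of_nonneg hc1 (mul_nonneg (neg_nonneg.mpr hlneg.le) hr)
  have hneg : (l : ℂ) • (star w ⬝ᵥ v) < 0 := by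
    rw [smul_eq_mul]
    exact mul_neg_of_neg_of_pos hlneg hpos
  exact absurd hneg h0.not_gt

/-- If `Q ⪰ 0`, `Z ⪰ 0` and the stationarity equation with zero
multiplier holds, i.e. `Hᴴ(I + H Q Hᴴ)⁻¹H − Gᴴ(I + G Q Gᴴ)⁻¹G + Z = 0`, then
`HᴴH − GᴴG = −(I + HᴴH Q) Z (I + Q GᴴG)`; in particular `HᴴH − GᴴG` is negative
semidefinite. -/
theorem stmt_3 {Nr Ne Nt : ℕ}
    (H : Matrix (Fin Nr) (Fin Nt) ℂ) (G : Matrix (Fin Ne) (Fin Nt) ℂ)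
    (Q Z : Matrix (Fin Nt) (Fin Nt) ℂ)
    (hQ : Q.PosSemidef) (hZ : Z.PosSemidef)
    (hstat : Hᴴ * (1 + H * Q * Hᴴ)⁻¹ * H - Gᴴ * (1 + G * Q * Gᴴ)⁻¹ * G + Z = 0) :
    Hᴴ * H - Gᴴ * G = -((1 + Hᴴ * H * Q) * Z * (1 + Q * (Gᴴ * G)))
      ∧ (-(Hᴴ * H - Gᴴ * G)).PosSemidef := by
  have hApsd : (Hᴴ * H).PosSemidef := posSemidef_conjTranspose_mul_self H
  have hBpsd : (Gᴴ * G).PosSemidef := posSemidef_conjTranspose_mul_self G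
  set A := Hᴴ * H with hA
  set B := Gᴴ * G with hB
  -- invertibility of the two "sandwich" matrices
  have hMH : (1 + H * Q * Hᴴ).PosDef :=
    Matrix.PosDef.one.add_posSemidef (hQ.mul_mul_conjTranspose_same H)
  have hMG : (1 + G * Q * Gᴴ).PosDef :=
    Matrix.PosDef.one.add_posSemidef (hQ.mul_mul_conjTranspose_same G)
  have hMHdet : IsUnit (1 + H * Q * Hᴴ).det := hMH.det_pos.ne'.isUnit
  have hMGdet : IsUnit (1 + G * Q * Gᴴ).det := hMG.det_pos.ne'.isUnit
  -- push-through identities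
  have hcomm : (1 + A * Q) * Hᴴ = Hᴴ * (1 + H * Q * Hᴴ) := by
    rw [hA]
    simp only [Matrix.add_mul, Matrix.mul_add, Matrix.one_mul, Matrix.mul_one, Matrix.mul_assoc]
  have pushH : (1 + A * Q) * (Hᴴ * (1 + H * Q * Hᴴ)⁻¹ * H) = A := by
    calc (1 + A * Q) * (Hᴴ * (1 + H * Q * Hᴴ)⁻¹ * H)
        = ((1 + A * Q) * Hᴴ) * (1 + H * Q * Hᴴ)⁻¹ * H := by
          simp only [Matrix.mul_assoc]
      _ = Hᴴ * ((1 + H * Q * Hᴴ) * (1 + H * Q * Hᴴ)⁻¹) * H := by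
          rw [hcomm]; simp only [Matrix.mul_assoc]
      _ = A := by rw [mul_nonsing_inv _ hMHdet, Matrix.mul_one]
  have hcommG : G * (1 + Q * B) = (1 + G * Q * Gᴴ) * G := by
    rw [hB]
    simp only [Matrix.add_mul, Matrix.mul_add, Matrix.one_mul, Matrix.mul_one, Matrix.mul_assoc]
  have pushG : (Gᴴ * (1 + G * Q * Gᴴ)⁻¹ * G) * (1 + Q * B) = B := by
    calc (Gᴴ * (1 + G * Q * Gᴴ)⁻¹ * G) * (1 + Q * B)
        = Gᴴ * (1 + G * Q * Gᴴ)⁻¹ * ((1 + G * Q * Gᴴ) * G) := by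
          rw [← hcommG]; simp only [Matrix.mul_assoc]
      _ = Gᴴ * ((1 + G * Q * Gᴴ)⁻¹ * (1 + G * Q * Gᴴ)) * G := by
          simp only [Matrix.mul_assoc]
      _ = B := by rw [nonsing_inv_mul _ hMGdet, Matrix.mul_one, hB]
  -- multiply the stationarity equation on both sides
  have h1 : (1 + A * Q) * (Hᴴ * (1 + H * Q * Hᴴ)⁻¹ * H - Gᴴ * (1 + G * Q * Gᴴ)⁻¹ * G + Z)
      * (1 + Q * B) = 0 := by rw [hstat, Matrix.mul_zero, Matrix.zero_mul]
  have expand : (1 + A * Q) * (Hᴴ * (1 + H * Q * Hᴴ)⁻¹ * H - Gᴴ * (1 + G * Q * Gᴴ)⁻¹ * G + Z)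
      * (1 + Q * B)
      = (1 + A * Q) * (Hᴴ * (1 + H * Q * Hᴴ)⁻¹ * H) * (1 + Q * B)
        - (1 + A * Q) * ((Gᴴ * (1 + G * Q * Gᴴ)⁻¹ * G) * (1 + Q * B))
        + (1 + A * Q) * Z * (1 + Q * B) := by noncomm_ring
  rw [expand, pushH, pushG] at h1
  have h3 : A * (1 + Q * B) - (1 + A * Q) * B = A - B := by noncomm_ring
  rw [h3] at h1
  have hmain : A - B = -((1 + A * Q) * Z * (1 + Q * B)) := eq_neg_of_add_eq_zero_left h1
  refine ⟨hmain, ?_⟩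
  -- second part: positive semidefiniteness
  have hCeq : B - A = (1 + A * Q) * Z * (1 + Q * B) := by
    rw [← neg_neg ((1 + A * Q) * Z * (1 + Q * B)), ← hmain, neg_sub]
  have hNdet : IsUnit (1 + Q * B).det := by
    have hdet : (1 + Q * B).det = (1 + G * Q * Gᴴ).det := by
      rw [hB, ← Matrix.mul_assoc, det_one_add_mul_comm, ← Matrix.mul_assoc]
    rw [hdet]; exact hMGdet
  have hConj : (1 + Q * B)ᴴ = 1 + B * Q := by
    rw [conjTranspose_add, conjTranspose_one, conjTranspose_mul, hBpsd.1.eq, hQ.1.eq]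
  have hConj' : (1 + B * Q)ᴴ = 1 + Q * B := by
    rw [conjTranspose_add, conjTranspose_one, conjTranspose_mul, hBpsd.1.eq, hQ.1.eq]
  have hNdet' : IsUnit (1 + B * Q).det := by
    rw [← hConj, Matrix.det_conjTranspose]
    exact hNdet.star
  set E : Matrix (Fin Nt) (Fin Nt) ℂ := (1 + B * Q)⁻¹ * (B - A) * (1 + Q * B)⁻¹ with hE
  have hEherm : E.IsHermitian := by
    have hBA : (B - A).IsHermitian := hBpsd.1.sub hApsd.1
    show ((1 + B * Q)⁻¹ * (B - A) * (1 + Q * B)⁻¹)ᴴ = _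
    rw [conjTranspose_mul, conjTranspose_mul,
      conjTranspose_nonsing_inv, conjTranspose_nonsing_inv, hConj, hConj', hBA.eq,
      ← Matrix.mul_assoc]
  -- E = (1+BQ)⁻¹ (1+AQ) Z
  have hE2 : E = (1 + B * Q)⁻¹ * ((1 + A * Q) * Z) := by
    rw [hE, hCeq, Matrix.mul_assoc, Matrix.mul_assoc, Matrix.mul_assoc,
      mul_nonsing_inv _ hNdet, Matrix.mul_one]
  -- (1+BQ)⁻¹ (B-A) = E (1+QB)
  have hE3 : (1 + B * Q)⁻¹ * (B - A) = E * (1 + Q * B) := by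
    rw [hE, Matrix.mul_assoc ((1 + B * Q)⁻¹ * (B - A)),
      nonsing_inv_mul _ hNdet, Matrix.mul_one]
  have hsplit : (1 : Matrix (Fin Nt) (Fin Nt) ℂ) + A * Q = (1 + B * Q) - (B - A) * Q := by
    noncomm_ring
  have hErec : E = Z - E * ((1 + Q * B) * (Q * Z)) := by
    calc E = (1 + B * Q)⁻¹ * ((1 + A * Q) * Z) := hE2
      _ = (1 + B * Q)⁻¹ * (((1 + B * Q) - (B - A) * Q) * Z) := by rw [← hsplit]
      _ = (1 + B * Q)⁻¹ * ((1 + B * Q) * Z) - (1 + B * Q)⁻¹ * ((B - A) * (Q * Z)) := by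
          rw [Matrix.sub_mul, Matrix.mul_sub, Matrix.mul_assoc (B - A)]
      _ = Z - ((1 + B * Q)⁻¹ * (B - A)) * (Q * Z) := by
          rw [← Matrix.mul_assoc, ← Matrix.mul_assoc, nonsing_inv_mul _ hNdet', Matrix.one_mul]
      _ = Z - E * ((1 + Q * B) * (Q * Z)) := by rw [hE3, Matrix.mul_assoc]
  set R : Matrix (Fin Nt) (Fin Nt) ℂ := Q + Q * B * Q with hRdef
  have hRherm : R.IsHermitian := by
    have := hBpsd.conjTranspose_mul_mul_same Q
    rw [hQ.1.eq] at this
    exact hQ.1.add this.1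
  have hRpsd : R.PosSemidef := by
    have := hBpsd.conjTranspose_mul_mul_same Q
    rw [hQ.1.eq] at this
    exact hQ.add this
  have hRZ : (1 + Q * B) * (Q * Z) = R * Z := by
    rw [hRdef, Matrix.add_mul, Matrix.add_mul, Matrix.one_mul, Matrix.mul_assoc (Q * B)]
  have hErec2 : E = Z - E * R * Z := by
    have h := hErec
    rw [hRZ, ← Matrix.mul_assoc] at h
    exact h
  have hErec3 : E = Z - Z * R * E := by
    conv_lhs => rw [← hEherm.eq, hErec2]
    rw [conjTranspose_sub, conjTranspose_mul, conjTranspose_mul, hZ.1.eq, hRherm.eq,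
      hEherm.eq, ← Matrix.mul_assoc]
  have hEpsd : E.PosSemidef := aux_psd hZ hRpsd hEherm hErec3
  have hfinal : (1 + Q * B)ᴴ * E * (1 + Q * B) = -(A - B) := by
    calc (1 + Q * B)ᴴ * E * (1 + Q * B)
        = (1 + B * Q) * ((1 + B * Q)⁻¹ * (B - A) * (1 + Q * B)⁻¹) * (1 + Q * B) := by
          rw [hConj, hE]
      _ = (1 + B * Q) * ((1 + B * Q)⁻¹ * ((B - A) * ((1 + Q * B)⁻¹ * (1 + Q * B)))) := by
          simp only [Matrix.mul_assoc]
      _ = (1 + B * Q) * ((1 + B * Q)⁻¹ * (B - A)) := by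
          rw [nonsing_inv_mul _ hNdet, Matrix.mul_one]
      _ = ((1 + B * Q) * (1 + B * Q)⁻¹) * (B - A) := by rw [← Matrix.mul_assoc]
      _ = B - A := by rw [mul_nonsing_inv _ hNdet', Matrix.one_mul]
      _ = -(A - B) := by rw [neg_sub]
  rw [← hfinal]
  exact hEpsd.conjTranspose_mul_mul_same (1 + Q * B)
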